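/- Let ζ : C^∞(M) → ℝ be a functional that is ℝ₊-homogeneous (ζ(sF) = sζ(F) for s > 0), normalized (ζ(1) = 1), vanishing on functions with displaceable support, and satisfying the Poisson bracket inequality |ζ(F+G) − ζ(F) − ζ(G)| ≤ √(2Q·‖{F,G}‖) whenever both F and G are supported in sets from a given class with constant Q. Then for any partition of unity f_1,...,f_N subordinated to a cover by N displaceable sets, the magnitude of Poisson non-commutativity satisfies ν_c(f) ≥ 1/(2N²Q); hence pb(W) ≥ 1/(2N²Q) for any open cover W = {W_1,...,W_N} by sets with sup_{φ ∈ G(W_j)} q(φ) ≤ Q. -/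

import Mathlib

open scoped BigOperators

/-- Lower bound for the Poisson bracket invariant of a cover by `N` displaceable
sets.  `ζ` is an abstract partial symplectic quasi-state, vanishing on functions
supported in one of the sets `W j` and satisfying the Poisson bracket inequality
with constant `Q`; `ν` is any bound on the magnitude of Poisson non-commutativity
of the partition of unity `f`.  Then `ν ≥ 1/(2N²Q)`, hence `pb(W) ≥ 1/(2N²Q)`. -/
theorem stmt_10 {M : Type*}
    (P : (M → ℝ) → (M → ℝ) → (M → ℝ))
    (ζ : (M → ℝ) → ℝ)
    {N : ℕ} (hN : 0 < N) (W : Fin N → Set M) (hcover : (⋃ j, W j) = Set.univ)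
    (Q : ℝ) (hQ : 0 < Q)
    (hζhom : ∀ (s : ℝ) (F : M → ℝ), 0 < s → ζ (s • F) = s * ζ F)
    (hζone : ζ (fun _ => 1) = 1)
    (hζvanish : ∀ F : M → ℝ, (∃ j, Function.support F ⊆ W j) → ζ F = 0)
    (hζpb : ∀ (F G : M → ℝ) (b : ℝ), 0 ≤ b →
      (∃ j, Function.support G ⊆ W j) → (∀ z, |P F G z| ≤ b) →
      |ζ (F + G) - ζ F - ζ G| ≤ Real.sqrt (2 * Q * b))
    (f : Fin N → M → ℝ)
    (hf0 : ∀ j z, 0 ≤ f j z) (hfsum : ∀ z, ∑ j, f j z = 1)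
    (hfsupp : ∀ j, Function.support (f j) ⊆ W j)
    (ν : ℝ) (hν0 : 0 ≤ ν)
    (hν : ∀ x y : Fin N → ℝ, (∀ i, |x i| ≤ 1) → (∀ i, |y i| ≤ 1) →
      ∀ z, |P (fun w => ∑ i, x i * f i w) (fun w => ∑ i, y i * f i w) z| ≤ ν) :
    1 / (2 * (N : ℝ)^2 * Q) ≤ ν := by

  set s := Real.sqrt (2 * Q * ν) with hs
  have hs0 : 0 ≤ s := Real.sqrt_nonneg _
  set g : ℕ → M → ℝ := fun k z => ∑ i : Fin N, (if (i : ℕ) < k then (1:ℝ) else 0) * f i z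
    with hg
  have hζ0 : ζ (g 0) = 0 := by
    apply hζvanish
    refine ⟨⟨0, hN⟩, ?_⟩
    intro z hz
    simp [Function.mem_support, hg] at hz
  have hstep : ∀ k : ℕ, k < N → ζ (g (k+1)) ≤ ζ (g k) + s := by
    intro k hk
    have h2 : (fun w => ∑ i, (if i = (⟨k, hk⟩ : Fin N) then (1:ℝ) else 0) * f i w)
        = f ⟨k, hk⟩ := by
      funext w
      simp
    have hP : ∀ z, |P (g k) (f ⟨k, hk⟩) z| ≤ ν := by
      intro z
      have := hν (fun i => if (i:ℕ) < k then 1 else 0)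
        (fun i => if i = ⟨k, hk⟩ then 1 else 0)
        (by intro i; (try dsimp only); split <;> norm_num)
        (by intro i; (try dsimp only); split <;> norm_num) z
      rw [h2] at this
      exact this
    have hsplit : g (k+1) = g k + f ⟨k, hk⟩ := by
      funext z
      have key : ∀ i : Fin N, (if (i:ℕ) < k+1 then (1:ℝ) else 0) * f i z
          = (if (i:ℕ) < k then (1:ℝ) else 0) * f i z
            + (if i = (⟨k, hk⟩ : Fin N) then (1:ℝ) else 0) * f i z := by
        intro i
        have : i = (⟨k, hk⟩ : Fin N) ↔ (i:ℕ) = k := by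
          constructor
          · intro h; rw [h]
          · intro h; exact Fin.ext h
        rw [← add_mul]
        congr 1
        simp only [this]
        by_cases h1 : (i:ℕ) < k
        · have : (i:ℕ) ≠ k := by omega
          simp [h1, this, Nat.lt_succ_of_lt h1]
        · by_cases h2 : (i:ℕ) = k
          · simp [h1, h2]
          · have : ¬ (i:ℕ) < k+1 := by omega
            simp [h1, h2, this]
      simp only [hg, Pi.add_apply]
      rw [Finset.sum_congr rfl (fun i _ => key i), Finset.sum_add_distrib]
      congr 1
      funext
      exact congrFun h2 z
    have hvan : ζ (f ⟨k, hk⟩) = 0 := hζvanish _ ⟨⟨k, hk⟩, hfsupp _⟩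
    have := hζpb (g k) (f ⟨k, hk⟩) ν hν0 ⟨⟨k, hk⟩, hfsupp _⟩ hP
    rw [hvan] at this
    rw [hsplit]
    have := abs_le.mp this
    linarith [this.2]
  have main : ∀ k, k ≤ N → ζ (g k) ≤ k * s := by
    intro k
    induction k with
    | zero => intro _; simp [hζ0]
    | succ n ih =>
      intro h
      have hn : n < N := h
      have h1 := hstep n hn
      have h2 := ih (le_of_lt hn)
      push_cast
      linarith
  have hgN : g N = fun _ => (1:ℝ) := by
    funext z
    simp only [hg]
    have : ∀ i : Fin N, (if (i:ℕ) < N then (1:ℝ) else 0) * f i z = f i z := by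
      intro i; simp [i.isLt]
    rw [Finset.sum_congr rfl (fun i _ => this i), hfsum]
  have h1N : (1:ℝ) ≤ N * s := by
    have := main N le_rfl
    rw [hgN, hζone] at this
    exact this
  have hNpos : (0:ℝ) < N := by exact_mod_cast hN
  have hsq : s^2 = 2 * Q * ν := Real.sq_sqrt (by positivity)
  have hs_pos : 1 / (N:ℝ) ≤ s := by
    rw [div_le_iff₀ hNpos]; linarith
  have : (1 / (N:ℝ))^2 ≤ s^2 := by
    apply pow_le_pow_left₀ (by positivity) hs_pos
  rw [hsq] at this
  rw [div_le_iff₀ (by positivity)]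
  have h2 : (1:ℝ) / (N:ℝ)^2 ≤ 2 * Q * ν := by
    rwa [div_pow, one_pow] at this
  rw [div_le_iff₀ (by positivity)] at h2
  linarith
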